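/- Let β > 0 and δ ≥ 1 with βδ ≥ 2, and assume (ln m_ξ)'' = O(ξ^{−β}) as ξ → ∞. Then there is a constant C such that for all pairs of nonnegative integers (j,k) with |j−k|^δ < (j+k)/2 one has |ρ_{j,k} − 1| ≤ C (j−k)² / (j+k)^β. -/

import Mathlib

open MeasureTheory Filter Complex Asymptotics Topology

noncomputable section

/-- The moment function `m_ξ = ∫_0^∞ r^ξ dμ(r)`. -/
def mom (μ : Measure ℝ) (ξ : ℝ) : ℝ := ∫ r in Set.Ioi (0:ℝ), r ^ ξ ∂μ

/-- `ρ_{j,k} = m_{j+k} / (m_{2j} m_{2k})^{1/2}`. -/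
def rho (μ : Measure ℝ) (j k : ℕ) : ℝ :=
  mom μ ((j : ℝ) + (k : ℝ)) / Real.sqrt (mom μ (2 * (j : ℝ)) * mom μ (2 * (k : ℝ)))

lemma abs_log_le {ε r : ℝ} (hε : 0 < ε) (hr : 0 < r) :
    |Real.log r| ≤ ε⁻¹ * (r ^ ε + r ^ (-ε)) := by
  have key : ∀ x : ℝ, 1 ≤ x → Real.log x ≤ ε⁻¹ * x ^ ε := by
    intro x hx
    have hx0 : (0:ℝ) < x := lt_of_lt_of_le one_pos hx
    have h1 : Real.log (x ^ ε) ≤ x ^ ε := (Real.log_le_sub_one_of_pos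
      (Real.rpow_pos_of_pos hx0 ε)).trans (by linarith)
    rw [Real.log_rpow hx0] at h1
    calc Real.log x = ε⁻¹ * (ε * Real.log x) := by field_simp
    _ ≤ ε⁻¹ * x ^ ε := mul_le_mul_of_nonneg_left h1 (by positivity)
  rcases le_total 1 r with h | h
  · rw [_root_.abs_of_nonneg (Real.log_nonneg h)]
    refine (key r h).trans ?_
    have h2 : (0:ℝ) ≤ r ^ (-ε) := Real.rpow_nonneg hr.le _
    nlinarith [inv_pos.mpr hε]
  · have h1 : 1 ≤ r⁻¹ := (one_le_inv_iff₀.mpr ⟨hr, h⟩ : _)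
    have h2 := key r⁻¹ h1
    rw [Real.log_inv, Real.inv_rpow hr.le, ← Real.rpow_neg hr.le] at h2
    rw [abs_le]
    have h3 : (0:ℝ) ≤ r ^ ε := Real.rpow_nonneg hr.le _
    have h4 : 0 ≤ Real.log r⁻¹ := Real.log_nonneg h1
    rw [Real.log_inv] at h4
    constructor
    · nlinarith [inv_pos.mpr hε]
    · nlinarith [inv_pos.mpr hε, Real.rpow_nonneg hr.le (-ε)]

lemma rpow_le_add {r c t d : ℝ} (hr : 0 < r) (hc : c ≤ t) (hd : t ≤ d) :
    r ^ t ≤ r ^ c + r ^ d := by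
  rcases le_total r 1 with h | h
  · have := Real.rpow_le_rpow_of_exponent_ge hr h hc
    have h2 : (0:ℝ) ≤ r ^ d := Real.rpow_nonneg hr.le _
    linarith
  · have := Real.rpow_le_rpow_of_exponent_le h hd
    have h2 : (0:ℝ) ≤ r ^ c := Real.rpow_nonneg hr.le _
    linarith

lemma pow_log_bound (n : ℕ) {a b t r : ℝ} (ha : 0 < a) (hat : a ≤ t) (htb : t ≤ b) (hr : 0 < r) :
    r ^ t * |Real.log r| ^ n ≤ (2 * (4 * (n+1) / a) ^ n) * (r ^ (a/2) + r ^ (2*b)) := by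
  set ε : ℝ := a / (2 * (n + 1)) with hεdef
  have hε : 0 < ε := by positivity
  have h1 : |Real.log r| ^ n ≤ (ε⁻¹ * (r ^ ε + r ^ (-ε))) ^ n :=
    pow_le_pow_left₀ (abs_nonneg _) (abs_log_le hε hr) n
  have h2 : (r ^ ε + r ^ (-ε)) ^ n ≤ 2 ^ n * (r ^ (ε * n) + r ^ (-(ε * n))) := by
    rcases le_total (r ^ (-ε)) (r ^ ε) with h | h
    · calc (r ^ ε + r ^ (-ε)) ^ n ≤ (2 * r ^ ε) ^ n := by
            apply pow_le_pow_left₀ (by positivity) (by linarith)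
        _ = 2 ^ n * (r ^ ε) ^ n := mul_pow _ _ _
        _ ≤ 2 ^ n * (r ^ (ε * n) + r ^ (-(ε * n))) := by
            rw [← Real.rpow_natCast (r ^ ε) n, ← Real.rpow_mul hr.le]
            have : (0:ℝ) ≤ r ^ (-(ε * n)) := Real.rpow_nonneg hr.le _
            nlinarith [pow_nonneg (zero_le_two (α := ℝ)) n]
    · calc (r ^ ε + r ^ (-ε)) ^ n ≤ (2 * r ^ (-ε)) ^ n := by
            apply pow_le_pow_left₀ (by positivity) (by linarith)
        _ = 2 ^ n * (r ^ (-ε)) ^ n := mul_pow _ _ _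
        _ ≤ 2 ^ n * (r ^ (ε * n) + r ^ (-(ε * n))) := by
            rw [← Real.rpow_natCast (r ^ (-ε)) n, ← Real.rpow_mul hr.le]
            have : (0:ℝ) ≤ r ^ (ε * n) := Real.rpow_nonneg hr.le _
            have heq : -ε * n = -(ε * n) := by ring
            rw [heq]
            nlinarith [pow_nonneg (zero_le_two (α := ℝ)) n]
  have h3 : r ^ t * |Real.log r| ^ n ≤ (ε⁻¹) ^ n * 2 ^ n * (r ^ (t + ε * n) + r ^ (t - ε * n)) := by
    calc r ^ t * |Real.log r| ^ n ≤ r ^ t * ((ε⁻¹ * (r ^ ε + r ^ (-ε))) ^ n) := by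
          apply mul_le_mul_of_nonneg_left h1 (Real.rpow_nonneg hr.le _)
      _ = (ε⁻¹) ^ n * (r ^ t * (r ^ ε + r ^ (-ε)) ^ n) := by rw [mul_pow]; ring
      _ ≤ (ε⁻¹) ^ n * (r ^ t * (2 ^ n * (r ^ (ε * n) + r ^ (-(ε * n))))) := by
          apply mul_le_mul_of_nonneg_left _ (by positivity)
          exact mul_le_mul_of_nonneg_left h2 (Real.rpow_nonneg hr.le _)
      _ = (ε⁻¹) ^ n * 2 ^ n * (r ^ t * r ^ (ε * n) + r ^ t * r ^ (-(ε * n))) := by ring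
      _ = (ε⁻¹) ^ n * 2 ^ n * (r ^ (t + ε * n) + r ^ (t - ε * n)) := by
          rw [← Real.rpow_add hr, ← Real.rpow_add hr]; ring_nf
  refine h3.trans ?_
  have hεn : ε * n ≤ a / 2 := by
    rw [hεdef]
    rw [div_mul_eq_mul_div, div_le_div_iff₀ (by positivity) (by norm_num)]
    have : (n:ℝ) ≤ n + 1 := by linarith
    nlinarith [ha.le, Nat.cast_nonneg (α := ℝ) n]
  have hεn0 : 0 ≤ ε * n := by positivity
  have hb1 : r ^ (t + ε * n) ≤ r ^ (a/2) + r ^ (2*b) := by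
    apply rpow_le_add hr (by linarith) (by linarith)
  have hb2 : r ^ (t - ε * n) ≤ r ^ (a/2) + r ^ (2*b) := by
    apply rpow_le_add hr (by linarith) (by linarith)
  have hc : (ε⁻¹) ^ n * 2 ^ n = (4 * (n+1) / a) ^ n := by
    rw [← mul_pow]
    congr 1
    rw [hεdef]
    field_simp
    ring
  rw [hc]
  have hpow : (0:ℝ) ≤ (4 * (n+1) / a) ^ n := by positivity
  nlinarith [hpow, hb1, hb2]

/-- generalized moment with log factor -/
def Mn (μ : Measure ℝ) (n : ℕ) (t : ℝ) : ℝ :=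
  ∫ r in Set.Ioi (0:ℝ), r ^ t * (Real.log r) ^ n ∂μ

lemma Mn_meas (μ : Measure ℝ) (n : ℕ) (t : ℝ) :
    AEStronglyMeasurable (fun r : ℝ => r ^ t * (Real.log r) ^ n) (μ.restrict (Set.Ioi 0)) := by
  apply Measurable.aestronglyMeasurable
  measurability

lemma Mn_integrable {μ : Measure ℝ}
    (hmom : ∀ ξ : ℝ, 0 ≤ ξ → IntegrableOn (fun r : ℝ => r ^ ξ) (Set.Ioi (0:ℝ)) μ)
    (n : ℕ) {a b t : ℝ} (ha : 0 < a) (hat : a ≤ t) (htb : t ≤ b) :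
    IntegrableOn (fun r : ℝ => r ^ t * (Real.log r) ^ n) (Set.Ioi (0:ℝ)) μ := by
  have hint : IntegrableOn
      (fun r : ℝ => (2 * (4 * (n+1) / a) ^ n) * (r ^ (a/2) + r ^ (2*b))) (Set.Ioi (0:ℝ)) μ :=
    (((hmom (a/2) (by positivity)).add (hmom (2*b) (by nlinarith))).const_mul _)
  refine Integrable.mono hint (Mn_meas μ n t) ?_
  filter_upwards [ae_restrict_mem measurableSet_Ioi] with r (hr : 0 < r)
  rw [Real.norm_eq_abs, Real.norm_eq_abs, abs_mul, _root_.abs_pow,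
    _root_.abs_of_nonneg (Real.rpow_nonneg hr.le t)]
  refine (pow_log_bound n ha hat htb hr).trans (le_abs_self _)

lemma Mn_hasDerivAt {μ : Measure ℝ}
    (hmom : ∀ ξ : ℝ, 0 ≤ ξ → IntegrableOn (fun r : ℝ => r ^ ξ) (Set.Ioi (0:ℝ)) μ)
    (n : ℕ) {ξ : ℝ} (hξ : 0 < ξ) :
    HasDerivAt (Mn μ n) (Mn μ (n+1) ξ) ξ := by
  have hball : ∀ x ∈ Metric.ball ξ (ξ/2), ξ/2 ≤ x ∧ x ≤ 3*ξ/2 := by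
    intro x hx
    rw [Metric.mem_ball, Real.dist_eq, abs_lt] at hx
    constructor <;> linarith [hx.1, hx.2]
  have key := hasDerivAt_integral_of_dominated_loc_of_deriv_le (μ := μ.restrict (Set.Ioi 0))
    (F := fun t r => r ^ t * (Real.log r) ^ n)
    (F' := fun t r => r ^ t * (Real.log r) ^ (n+1))
    (x₀ := ξ)
    (bound := fun r => (2 * (4 * (n+1+1) / (ξ/2)) ^ (n+1)) * (r ^ (ξ/2/2) + r ^ (2*(3*ξ/2))))
    (s := Metric.ball ξ (ξ/2)) (Metric.ball_mem_nhds ξ (by positivity))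
    (Eventually.of_forall fun x => Mn_meas μ n x)
    (Mn_integrable hmom n hξ le_rfl le_rfl)
    (Mn_meas μ (n+1) ξ)
    ?_ ?_ ?_
  · exact key.2
  · -- bound
    filter_upwards [ae_restrict_mem measurableSet_Ioi] with r (hr : 0 < r)
    intro x hx
    obtain ⟨h1, h2⟩ := hball x hx
    rw [Real.norm_eq_abs, abs_mul, _root_.abs_pow,
      _root_.abs_of_nonneg (Real.rpow_nonneg hr.le x)]
    have hb := pow_log_bound (n+1) (a := ξ/2) (b := 3*ξ/2) (by positivity) h1 h2 hr
    refine hb.trans_eq ?_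
    push_cast; ring
  · -- integrable bound
    exact (((hmom (ξ/2/2) (by positivity)).add (hmom (2*(3*ξ/2)) (by positivity))).const_mul _)
  · -- differentiability
    filter_upwards [ae_restrict_mem measurableSet_Ioi] with r (hr : 0 < r)
    intro x _
    have h := (Real.hasStrictDerivAt_const_rpow hr x).hasDerivAt.mul_const ((Real.log r) ^ n)
    refine h.congr_deriv ?_
    rw [pow_succ]
    ring

lemma mom_eq_Mn (μ : Measure ℝ) : mom μ = Mn μ 0 := by
  funext t; simp [mom, Mn]

lemma mom_pos {μ : Measure ℝ}
    (hpos : μ (Set.Ioi (0:ℝ)) ≠ 0)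
    (hmom : ∀ ξ : ℝ, 0 ≤ ξ → IntegrableOn (fun r : ℝ => r ^ ξ) (Set.Ioi (0:ℝ)) μ)
    {ξ : ℝ} (hξ : 0 ≤ ξ) : 0 < mom μ ξ := by
  rw [mom, setIntegral_pos_iff_support_of_nonneg_ae]
  · refine lt_of_lt_of_le hpos.bot_lt (measure_mono ?_)
    intro r hr
    refine ⟨?_, hr⟩
    simp only [Function.mem_support]
    exact (Real.rpow_pos_of_pos hr ξ).ne'
  · filter_upwards [ae_restrict_mem measurableSet_Ioi] with r (hr : 0 < r)
    exact Real.rpow_nonneg hr.le ξ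
  · exact hmom ξ hξ

section LogDeriv

variable {μ : Measure ℝ}
  (hpos : μ (Set.Ioi (0:ℝ)) ≠ 0)
  (hmom : ∀ ξ : ℝ, 0 ≤ ξ → IntegrableOn (fun r : ℝ => r ^ ξ) (Set.Ioi (0:ℝ)) μ)

include hpos hmom

lemma logmom_hasDerivAt {ξ : ℝ} (hξ : 0 < ξ) :
    HasDerivAt (fun t => Real.log (mom μ t)) (Mn μ 1 ξ / Mn μ 0 ξ) ξ := by
  have h0 : HasDerivAt (Mn μ 0) (Mn μ 1 ξ) ξ := Mn_hasDerivAt hmom 0 hξ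
  have hne : Mn μ 0 ξ ≠ 0 := by
    rw [← mom_eq_Mn]; exact (mom_pos hpos hmom hξ.le).ne'
  have := h0.log hne
  rw [mom_eq_Mn]
  exact this

lemma logmom_deriv {ξ : ℝ} (hξ : 0 < ξ) :
    deriv (fun t => Real.log (mom μ t)) ξ = Mn μ 1 ξ / Mn μ 0 ξ :=
  (logmom_hasDerivAt hpos hmom hξ).deriv

lemma logmom_hasDerivAt' {ξ : ℝ} (hξ : 0 < ξ) :
    HasDerivAt (fun t => Real.log (mom μ t))
      (deriv (fun t => Real.log (mom μ t)) ξ) ξ := by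
  rw [logmom_deriv hpos hmom hξ]
  exact logmom_hasDerivAt hpos hmom hξ

lemma logmom_deriv_hasDerivAt {ξ : ℝ} (hξ : 0 < ξ) :
    HasDerivAt (deriv (fun t => Real.log (mom μ t)))
      (deriv (deriv (fun t => Real.log (mom μ t))) ξ) ξ := by
  have hne : Mn μ 0 ξ ≠ 0 := by
    rw [← mom_eq_Mn]; exact (mom_pos hpos hmom hξ.le).ne'
  have hq : HasDerivAt (fun t => Mn μ 1 t / Mn μ 0 t)
      ((Mn μ 2 ξ * Mn μ 0 ξ - Mn μ 1 ξ * Mn μ 1 ξ) / (Mn μ 0 ξ)^2) ξ :=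
    (Mn_hasDerivAt hmom 1 hξ).div (Mn_hasDerivAt hmom 0 hξ) hne
  have heq : deriv (fun t => Real.log (mom μ t)) =ᶠ[𝓝 ξ] fun t => Mn μ 1 t / Mn μ 0 t := by
    filter_upwards [isOpen_Ioi.mem_nhds (Set.mem_Ioi.mpr hξ)] with t (ht : 0 < t)
    exact logmom_deriv hpos hmom ht
  have h2 : HasDerivAt (deriv (fun t => Real.log (mom μ t)))
      ((Mn μ 2 ξ * Mn μ 0 ξ - Mn μ 1 ξ * Mn μ 1 ξ) / (Mn μ 0 ξ)^2) ξ :=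
    hq.congr_of_eventuallyEq heq
  rw [h2.deriv]
  exact h2

end LogDeriv

lemma second_diff_bound {f : ℝ → ℝ} {s h K : ℝ} (hh : 0 < h)
    (hf1 : ∀ x ∈ Set.Icc (s-h) (s+h), HasDerivAt f (deriv f x) x)
    (hf2 : ∀ x ∈ Set.Icc (s-h) (s+h), HasDerivAt (deriv f) (deriv (deriv f) x) x)
    (hK : ∀ x ∈ Set.Icc (s-h) (s+h), |deriv (deriv f) x| ≤ K) :
    |f (s+h) + f (s-h) - 2 * f s| ≤ 2 * h^2 * K := by
  have hs1 : s < s + h := by linarith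
  have hs2 : s - h < s := by linarith
  have hsub1 : Set.Icc s (s+h) ⊆ Set.Icc (s-h) (s+h) :=
    Set.Icc_subset_Icc (by linarith) le_rfl
  have hsub2 : Set.Icc (s-h) s ⊆ Set.Icc (s-h) (s+h) :=
    Set.Icc_subset_Icc le_rfl (by linarith)
  obtain ⟨c₁, hc₁m, hc₁⟩ := exists_hasDerivAt_eq_slope f (deriv f) hs1
    (fun x hx => ((hf1 x (hsub1 hx)).continuousAt).continuousWithinAt)
    (fun x hx => hf1 x (hsub1 (Set.Ioo_subset_Icc_self hx)))
  obtain ⟨c₂, hc₂m, hc₂⟩ := exists_hasDerivAt_eq_slope f (deriv f) hs2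
    (fun x hx => ((hf1 x (hsub2 hx)).continuousAt).continuousWithinAt)
    (fun x hx => hf1 x (hsub2 (Set.Ioo_subset_Icc_self hx)))
  have hcc : c₂ < c₁ := lt_trans hc₂m.2 hc₁m.1
  have hsubc : Set.Icc c₂ c₁ ⊆ Set.Icc (s-h) (s+h) :=
    Set.Icc_subset_Icc (by linarith [hc₂m.1]) (by linarith [hc₁m.2])
  obtain ⟨c₃, hc₃m, hc₃⟩ := exists_hasDerivAt_eq_slope (deriv f) (deriv (deriv f)) hcc
    (fun x hx => ((hf2 x (hsubc hx)).continuousAt).continuousWithinAt)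
    (fun x hx => hf2 x (hsubc (Set.Ioo_subset_Icc_self hx)))
  have he1 : f (s+h) - f s = h * deriv f c₁ := by
    rw [hc₁, add_sub_cancel_left, mul_div_cancel₀ _ hh.ne']
  have he2 : f s - f (s-h) = h * deriv f c₂ := by
    rw [hc₂, sub_sub_cancel, mul_div_cancel₀ _ hh.ne']
  have he3 : deriv f c₁ - deriv f c₂ = (c₁ - c₂) * deriv (deriv f) c₃ := by
    have hne : c₁ - c₂ ≠ 0 := sub_ne_zero.mpr hcc.ne'
    rw [hc₃]; field_simp
  have hD : f (s+h) + f (s-h) - 2 * f s = h * ((c₁ - c₂) * deriv (deriv f) c₃) := by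
    rw [← he3]; linarith
  rw [hD, abs_mul, abs_mul, _root_.abs_of_nonneg hh.le,
    _root_.abs_of_nonneg (by linarith : (0:ℝ) ≤ c₁ - c₂)]
  have hK3 : |deriv (deriv f) c₃| ≤ K := hK c₃ (hsubc (Set.Ioo_subset_Icc_self hc₃m))
  have hcle : c₁ - c₂ ≤ 2 * h := by
    have := hc₁m.2; have := hc₂m.1; linarith
  have h0 : (0:ℝ) ≤ |deriv (deriv f) c₃| := abs_nonneg _
  have hstep : (c₁ - c₂) * |deriv (deriv f) c₃| ≤ 2 * h * K :=
    mul_le_mul hcle hK3 h0 (by positivity)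
  calc h * ((c₁ - c₂) * |deriv (deriv f) c₃|) ≤ h * (2 * h * K) :=
        mul_le_mul_of_nonneg_left hstep hh.le
    _ = 2 * h^2 * K := by ring

lemma abs_exp_sub_one_le' (x : ℝ) : |Real.exp x - 1| ≤ |x| * Real.exp |x| := by
  rcases le_or_gt 0 x with hx | hx
  · rw [_root_.abs_of_nonneg hx, _root_.abs_of_nonneg (by linarith [Real.one_le_exp hx])]
    have h1 : (1 - x) * Real.exp x ≤ 1 := by
      have h2 := Real.add_one_le_exp (-x)
      have h3 : (-x + 1) * Real.exp x ≤ Real.exp (-x) * Real.exp x :=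
        mul_le_mul_of_nonneg_right h2 (Real.exp_pos x).le
      rw [← Real.exp_add] at h3
      simp at h3
      linarith
    nlinarith
  · rw [_root_.abs_of_neg hx, _root_.abs_of_nonpos (by linarith [Real.exp_lt_one_iff.mpr hx] : Real.exp x - 1 ≤ 0)]
    have h1 : x + 1 ≤ Real.exp x := Real.add_one_le_exp x
    have h2 : 1 ≤ Real.exp (-x) := Real.one_le_exp (by linarith)
    nlinarith

lemma rho_comm (μ : Measure ℝ) (j k : ℕ) : rho μ j k = rho μ k j := by
  rw [rho, rho, add_comm, mul_comm (mom μ (2 * (j:ℝ)))]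

/-- If `β > 0`, `δ ≥ 1`, `βδ ≥ 2` and `(ln m_ξ)'' = O(ξ^{−β})`, then there is a
constant `C` such that `|ρ_{j,k} − 1| ≤ C (j−k)²/(j+k)^β` for all `(j,k)` with
`|j−k|^δ < (j+k)/2`. -/
theorem rho_near_diagonal
    (μ : Measure ℝ)
    (hsupp : μ (Set.Iic (0:ℝ)) = 0)
    (hpos : μ (Set.Ioi (0:ℝ)) ≠ 0)
    (hmom : ∀ ξ : ℝ, 0 ≤ ξ → IntegrableOn (fun r : ℝ => r ^ ξ) (Set.Ioi (0:ℝ)) μ)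
    (β δ : ℝ) (hβ : 0 < β) (hδ : 1 ≤ δ) (hβδ : 2 ≤ β * δ)
    (hO : (fun ξ => deriv (deriv fun t => Real.log (mom μ t)) ξ)
            =O[atTop] fun ξ : ℝ => ξ ^ (-β)) :
    ∃ C : ℝ, ∀ j k : ℕ, |(j:ℝ) - (k:ℝ)| ^ δ < ((j:ℝ) + (k:ℝ)) / 2 →
      |rho μ j k - 1| ≤ C * ((j:ℝ) - (k:ℝ))^2 / ((j:ℝ) + (k:ℝ)) ^ β := by
  have hδ0 : (0:ℝ) < δ := lt_of_lt_of_le one_pos hδ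
  set f : ℝ → ℝ := fun t => Real.log (mom μ t) with hfdef
  obtain ⟨K₀, hK₀pos, hKb⟩ := hO.exists_pos
  rw [isBigOWith_iff, eventually_atTop] at hKb
  obtain ⟨R₀, hR⟩ := hKb
  set S : ℝ := max (2 * R₀) 4 with hSdef
  set N : ℕ := ⌈S⌉₊ + 1 with hNdef
  have hne : ((Finset.range N) ×ˢ (Finset.range N)).Nonempty :=
    ⟨(0,0), by simp [Finset.mem_product, hNdef]⟩
  set C₂ : ℝ := (Finset.range N ×ˢ Finset.range N).sup' hne
    (fun p : ℕ × ℕ => |rho μ p.1 p.2 - 1| * ((p.1:ℝ)+(p.2:ℝ))^β / ((p.1:ℝ)-(p.2:ℝ))^2)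
    with hC₂def
  set C₁ : ℝ := K₀ * Real.exp K₀ * 2 ^ β with hC₁def
  set C : ℝ := max C₁ C₂ with hCdef
  refine ⟨C, ?_⟩
  have main : ∀ j k : ℕ, k < j → |(j:ℝ) - (k:ℝ)| ^ δ < ((j:ℝ) + (k:ℝ)) / 2 →
      |rho μ j k - 1| ≤ C * ((j:ℝ) - (k:ℝ))^2 / ((j:ℝ) + (k:ℝ)) ^ β := by
    intro j k hkj hcond
    set s : ℝ := (j:ℝ) + (k:ℝ) with hsdef
    set h : ℝ := (j:ℝ) - (k:ℝ) with hhdef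
    have hjk' : (k:ℝ) + 1 ≤ (j:ℝ) := by exact_mod_cast hkj
    have hh1 : 1 ≤ h := by rw [hhdef]; linarith
    have hh : 0 < h := lt_of_lt_of_le one_pos hh1
    have habs : |h| = h := _root_.abs_of_pos hh
    have hhδ : h ≤ h ^ δ := by
      calc h = h ^ (1:ℝ) := (Real.rpow_one h).symm
      _ ≤ h ^ δ := Real.rpow_le_rpow_of_exponent_le hh1 hδ
    rw [habs] at hcond
    have hhs : h < s / 2 := lt_of_le_of_lt hhδ hcond
    have hs0 : (0:ℝ) < s := by linarith
    have hsh : 0 < s - h := by linarith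
    have hsβ : (0:ℝ) < s ^ β := Real.rpow_pos_of_pos hs0 β
    have hh2 : (0:ℝ) < h ^ 2 := by positivity
    rcases lt_or_ge s S with hsmall | hbig
    · -- finitely many small pairs
      have hk0 : (0:ℝ) ≤ (k:ℝ) := Nat.cast_nonneg k
      have hj0 : (0:ℝ) ≤ (j:ℝ) := Nat.cast_nonneg j
      have hcast : ∀ m : ℕ, (m:ℝ) ≤ s → m < N := by
        intro m hm
        have h2 : S ≤ (⌈S⌉₊ : ℝ) := Nat.le_ceil S
        have h1 : (m:ℝ) < (N:ℝ) := by
          rw [hNdef]; push_cast; linarith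
        exact_mod_cast h1
      have hjN : j < N := hcast j (by rw [hsdef]; linarith)
      have hkN : k < N := hcast k (by rw [hsdef]; linarith)
      have hmem : ((j,k) : ℕ × ℕ) ∈ Finset.range N ×ˢ Finset.range N := by
        simp [Finset.mem_product, hjN, hkN]
      have hFle := Finset.le_sup' (s := Finset.range N ×ˢ Finset.range N)
        (fun p : ℕ × ℕ => |rho μ p.1 p.2 - 1| * ((p.1:ℝ)+(p.2:ℝ))^β / ((p.1:ℝ)-(p.2:ℝ))^2) hmem
      simp only at hFle
      rw [← hsdef, ← hhdef, ← hC₂def] at hFle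
      have key : |rho μ j k - 1| * s ^ β / h ^ 2 ≤ C :=
        hFle.trans (le_max_right C₁ C₂)
      rw [div_le_iff₀ hh2] at key
      rw [le_div_iff₀ hsβ]
      linarith
    · -- large pairs : asymptotic regime
      have hR₀S : 2 * R₀ ≤ S := le_max_left _ _
      have h4S : (4:ℝ) ≤ S := le_max_right _ _
      have hxpos : ∀ x ∈ Set.Icc (s-h) (s+h), 0 < x := by
        intro x hx
        have := hx.1; linarith
      have hf1 : ∀ x ∈ Set.Icc (s-h) (s+h), HasDerivAt f (deriv f x) x :=
        fun x hx => logmom_hasDerivAt' hpos hmom (hxpos x hx)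
      have hf2 : ∀ x ∈ Set.Icc (s-h) (s+h), HasDerivAt (deriv f) (deriv (deriv f) x) x :=
        fun x hx => logmom_deriv_hasDerivAt hpos hmom (hxpos x hx)
      have hK : ∀ x ∈ Set.Icc (s-h) (s+h), |deriv (deriv f) x| ≤ K₀ * (s/2) ^ (-β) := by
        intro x hx
        have hx1 : s - h ≤ x := hx.1
        have hx2 : s / 2 ≤ x := by linarith
        have hxR : R₀ ≤ x := by linarith
        have hx0 : 0 < x := hxpos x hx
        have hb := hR x hxR
        rw [Real.norm_eq_abs, Real.norm_eq_abs,
          _root_.abs_of_nonneg (Real.rpow_nonneg hx0.le _)] at hb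
        refine hb.trans ?_
        exact mul_le_mul_of_nonneg_left
          (Real.rpow_le_rpow_of_nonpos (by linarith) hx2 (by linarith)) hK₀pos.le
      have hD := second_diff_bound hh hf1 hf2 hK
      set x : ℝ := f s - (f (s+h) + f (s-h)) / 2 with hxdef
      have hxabs : |x| ≤ h ^ 2 * (K₀ * (s/2) ^ (-β)) := by
        have hx2 : x = -((f (s+h) + f (s-h) - 2 * f s) / 2) := by rw [hxdef]; ring
        rw [hx2, abs_neg, abs_div, _root_.abs_two]
        linarith
      have hrho : rho μ j k = Real.exp x := by
        have h2j : 2 * (j:ℝ) = s + h := by rw [hsdef, hhdef]; ring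
        have h2k : 2 * (k:ℝ) = s - h := by rw [hsdef, hhdef]; ring
        have e1 : mom μ (s + h) = Real.exp (f (s+h)) :=
          (Real.exp_log (mom_pos hpos hmom (by linarith))).symm
        have e2 : mom μ (s - h) = Real.exp (f (s-h)) :=
          (Real.exp_log (mom_pos hpos hmom hsh.le)).symm
        have e3 : mom μ s = Real.exp (f s) :=
          (Real.exp_log (mom_pos hpos hmom hs0.le)).symm
        rw [rho, ← hsdef, h2j, h2k, e1, e2, e3, ← Real.exp_add]
        have hsq : Real.exp (f (s+h) + f (s-h)) =
            (Real.exp ((f (s+h) + f (s-h)) / 2)) ^ 2 := by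
          rw [sq, ← Real.exp_add]; ring_nf
        rw [hsq, Real.sqrt_sq (Real.exp_nonneg _), ← Real.exp_sub, hxdef]
      have hs2ge : (2:ℝ) ≤ s / 2 := by linarith
      have h2β : h ^ 2 ≤ (s/2) ^ β := by
        have e1 : h ^ 2 = (h ^ δ) ^ (2/δ) := by
          rw [← Real.rpow_natCast h 2, ← Real.rpow_mul hh.le]
          congr 1
          field_simp
          norm_num
        rw [e1]
        calc (h ^ δ) ^ (2/δ) ≤ (s/2) ^ (2/δ) := by
              apply Real.rpow_le_rpow (Real.rpow_nonneg hh.le δ) hcond.le (by positivity)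
        _ ≤ (s/2) ^ β := by
              apply Real.rpow_le_rpow_of_exponent_le (by linarith)
              rw [div_le_iff₀ hδ0]
              linarith [mul_comm β δ]
      have hfrac : h ^ 2 * (s/2) ^ (-β) ≤ 1 := by
        rw [Real.rpow_neg (by linarith), ← div_eq_mul_inv,
          div_le_one (by positivity)]
        exact h2β
      have hxK : |x| ≤ K₀ := by
        calc |x| ≤ h ^ 2 * (K₀ * (s/2) ^ (-β)) := hxabs
        _ = K₀ * (h ^ 2 * (s/2) ^ (-β)) := by ring
        _ ≤ K₀ * 1 := mul_le_mul_of_nonneg_left hfrac hK₀pos.le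
        _ = K₀ := mul_one _
      have hface : (s/2) ^ (-β) = 2 ^ β / s ^ β := by
        rw [Real.rpow_neg (by linarith), Real.div_rpow hs0.le (by norm_num : (0:ℝ) ≤ 2)]
        rw [inv_div]
      calc |rho μ j k - 1| = |Real.exp x - 1| := by rw [hrho]
      _ ≤ |x| * Real.exp |x| := abs_exp_sub_one_le' x
      _ ≤ (h ^ 2 * (K₀ * (s/2) ^ (-β))) * Real.exp K₀ := by
          apply mul_le_mul hxabs (Real.exp_le_exp.mpr hxK) (Real.exp_nonneg _)
          positivity
      _ = C₁ * h ^ 2 / s ^ β := by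
          rw [hface, hC₁def]
          field_simp
      _ ≤ C * h ^ 2 / s ^ β := by
          gcongr
          exact le_max_left _ _
  intro j k hcond
  rcases Nat.lt_trichotomy k j with hkj | hkj
  · exact main j k hkj hcond
  rcases hkj with hkj | hjk
  · subst hkj
    have hrho1 : rho μ k k = 1 := by
      rw [rho]
      have h2j : (k:ℝ) + (k:ℝ) = 2 * (k:ℝ) := by ring
      rw [h2j, Real.sqrt_mul_self (mom_pos hpos hmom (by positivity)).le,
        div_self (mom_pos hpos hmom (by positivity)).ne']
    rw [hrho1]
    simp
  · have hcond' : |(k:ℝ) - (j:ℝ)| ^ δ < ((k:ℝ) + (j:ℝ)) / 2 := by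
      rwa [abs_sub_comm, add_comm]
    have := main k j hjk hcond'
    rw [rho_comm μ j k]
    calc |rho μ k j - 1| ≤ C * ((k:ℝ) - (j:ℝ))^2 / ((k:ℝ) + (j:ℝ)) ^ β := this
    _ = C * ((j:ℝ) - (k:ℝ))^2 / ((j:ℝ) + (k:ℝ)) ^ β := by rw [add_comm]; ring_nf


end
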